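/- arXiv:2008.12940 — 3 statements merged into one kernel-verified Lean document; each statement's English description precedes it below -/
import Mathlib

section
/- Let ν, γ > 0 and define the family of functions w_j : ℝ≥0 → ℝ, j ≥ 0, by w_0(t) = (1 − e^{−2νt})/(2ν) and ẇ_j(t) = −2ν·w_j(t) + γ·w_{j−1}(t), w_j(0) = 0 for j ≥ 1. Then w_j(t) = (1/(2ν))·(γ/(2ν))^j·(1 − e^{−2νt}·Σ_{k=0}^{j} (2νt)^k/k!) for all j ≥ 0 and t ≥ 0. -/
open Finset

lemma partial_exp_deriv (n : ℕ) (x : ℝ) :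
    HasDerivAt (fun x : ℝ => ∑ k ∈ Finset.range (n+1), x ^ k / (Nat.factorial k : ℝ))
      (∑ k ∈ Finset.range n, x ^ k / (Nat.factorial k : ℝ)) x := by
  induction n with
  | zero =>
      have h : (fun x : ℝ => ∑ k ∈ Finset.range (0+1), x ^ k / (Nat.factorial k : ℝ))
          = fun _ : ℝ => (1:ℝ) := by
        funext y; simp
      rw [h]
      simpa using hasDerivAt_const x (1:ℝ)
  | succ n ih =>
      have h2 : HasDerivAt (fun x : ℝ => x ^ (n+1) / (Nat.factorial (n+1) : ℝ))
          (x ^ n / (Nat.factorial n : ℝ)) x := by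
        have h := (hasDerivAt_pow (n+1) x).div_const (Nat.factorial (n+1) : ℝ)
        refine h.congr_deriv ?_
        have hn : (Nat.factorial n : ℝ) ≠ 0 := by positivity
        have hn1 : (Nat.factorial (n+1) : ℝ) ≠ 0 := by positivity
        rw [Nat.factorial_succ]
        push_cast
        field_simp
      have h := ih.fun_add h2
      simp only [← Finset.sum_range_succ] at h
      exact h

theorem gramian_boundary_elements (ν γ : ℝ) (hν : 0 < ν) (hγ : 0 < γ)
    (w : ℕ → ℝ → ℝ)
    (h0 : ∀ t : ℝ, w 0 t = (1 - Real.exp (-2 * ν * t)) / (2 * ν))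
    (hderiv : ∀ j : ℕ, 1 ≤ j → ∀ t : ℝ,
      HasDerivAt (w j) (-2 * ν * w j t + γ * w (j - 1) t) t)
    (hinit : ∀ j : ℕ, 1 ≤ j → w j 0 = 0) :
    ∀ (j : ℕ) (t : ℝ), 0 ≤ t →
      w j t = (1 / (2 * ν)) * (γ / (2 * ν)) ^ j *
        (1 - Real.exp (-2 * ν * t) *
          ∑ k ∈ Finset.range (j + 1), (2 * ν * t) ^ k / (Nat.factorial k : ℝ)) := by
  have hν' : (2 * ν) ≠ 0 := by positivity
  intro j
  induction j with
  | zero =>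
      intro t ht
      rw [h0]
      simp [Finset.sum_range_one]
      ring
  | succ j ih =>
      intro t ht
      -- f s = exp(2νs) * w (j+1) s, g s = exp(2νs) * (formula)
      set C : ℝ := (1 / (2 * ν)) * (γ / (2 * ν)) ^ (j+1) with hC
      set f : ℝ → ℝ := fun s => Real.exp (2 * ν * s) * w (j+1) s with hf
      set g : ℝ → ℝ := fun s => C *
        (Real.exp (2 * ν * s) - ∑ k ∈ Finset.range (j+2), (2 * ν * s) ^ k / (Nat.factorial k : ℝ))
        with hg
      set d : ℝ → ℝ := fun s => γ * ((1 / (2 * ν)) * (γ / (2 * ν)) ^ j *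
        (Real.exp (2 * ν * s) - ∑ k ∈ Finset.range (j+1), (2 * ν * s) ^ k / (Nat.factorial k : ℝ)))
        with hd
      have hlin : ∀ s : ℝ, HasDerivAt (fun s : ℝ => 2 * ν * s) (2 * ν) s := by
        intro s
        simpa using (hasDerivAt_id s).const_mul (2 * ν)
      have hexp : ∀ s : ℝ, HasDerivAt (fun s : ℝ => Real.exp (2 * ν * s))
          (2 * ν * Real.exp (2 * ν * s)) s := by
        intro s
        have h := (hlin s).exp
        convert h using 1
        ring
      have hS : ∀ (n : ℕ) (s : ℝ), HasDerivAt
          (fun s : ℝ => ∑ k ∈ Finset.range (n+1), (2 * ν * s) ^ k / (Nat.factorial k : ℝ))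
          (2 * ν * ∑ k ∈ Finset.range n, (2 * ν * s) ^ k / (Nat.factorial k : ℝ)) s := by
        intro n s
        have h := HasDerivAt.comp s (partial_exp_deriv n (2 * ν * s)) (hlin s)
        refine h.congr_deriv ?_
        ring
      -- derivative of f
      have hfd : ∀ s : ℝ, HasDerivAt f
          (Real.exp (2 * ν * s) * (γ * w j s)) s := by
        intro s
        have h1 := (hexp s).mul (hderiv (j+1) (by omega) s)
        have : (j + 1 - 1 : ℕ) = j := by omega
        rw [this] at h1
        refine h1.congr_deriv ?_
        ring
      -- derivative of g
      have hgd : ∀ s : ℝ, HasDerivAt g (d s) s := by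
        intro s
        have h1 := ((hexp s).sub (hS (j+1) s)).const_mul C
        refine h1.congr_deriv ?_
        simp only [hd, hC]
        have : (γ / (2 * ν)) ^ (j + 1) = (γ / (2 * ν)) ^ j * (γ / (2 * ν)) := pow_succ _ _
        rw [this]
        field_simp
      -- on [0, t], derivative of f equals d
      have hfd' : ∀ s ∈ Set.Icc (0:ℝ) t, HasDerivAt f (d s) s := by
        intro s hs
        have h1 := hfd s
        have h2 := ih s hs.1
        rw [h2] at h1
        convert h1 using 1
        simp only [hd]
        have hE : Real.exp (2 * ν * s) * Real.exp (-2 * ν * s) = 1 := by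
          rw [← Real.exp_add]; norm_num
        have : Real.exp (-2 * ν * s) = (Real.exp (2 * ν * s))⁻¹ := by
          rw [← Real.exp_neg]; ring_nf
        rw [this]
        have hEne : Real.exp (2 * ν * s) ≠ 0 := (Real.exp_pos _).ne'
        field_simp
      have key : f t = g t := by
        have h00 : f 0 = g 0 := by
          simp only [hf, hg, hC]
          rw [hinit (j+1) (by omega)]
          rw [Finset.sum_eq_single 0]
          · simp
          · intro k _ hk
            simp [zero_pow hk, mul_comm]
          · simp
        have := eq_of_has_deriv_right_eq
          (f' := d) (a := 0) (b := t)
          (fun s hs => (hfd' s (Set.mem_Icc_of_Ico hs)).hasDerivWithinAt)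
          (fun s _ => (hgd s).hasDerivWithinAt)
          (fun s _ => (hfd s).continuousAt.continuousWithinAt)
          (fun s _ => (hgd s).continuousAt.continuousWithinAt)
          h00
        exact this t (Set.mem_Icc.mpr ⟨ht, le_refl t⟩)
      -- unfold key
      have hEne : Real.exp (2 * ν * t) ≠ 0 := (Real.exp_pos _).ne'
      have hfin : Real.exp (2 * ν * t) * w (j+1) t =
          C * (Real.exp (2 * ν * t) -
            ∑ k ∈ Finset.range (j+2), (2 * ν * t) ^ k / (Nat.factorial k : ℝ)) := key
      have : w (j+1) t = C * (1 - (Real.exp (2 * ν * t))⁻¹ *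
          ∑ k ∈ Finset.range (j+2), (2 * ν * t) ^ k / (Nat.factorial k : ℝ)) := by
        field_simp at hfin ⊢
        linarith [hfin]
      rw [this]
      have hE2 : Real.exp (-2 * ν * t) = (Real.exp (2 * ν * t))⁻¹ := by
        rw [← Real.exp_neg]; ring_nf
      rw [hE2, hC]
end

section
/- Let ν, γ > 0 and d ≥ 1, b ≥ 1 be integers. Define W_{j,k}(t) for 0 ≤ j,k ≤ d as the solution of the matrix differential Lyapunov equation Ẇ = AW + WAᵀ + e₀e₀ᵀ with W(0) = 0, where A is the (d+1)×(d+1) matrix of the weighted directed path with A_{j,j} = −ν for all j, A_{j,j−1} = γ for 1 ≤ j ≤ d−1, and A_{d,d−1} = bγ. Then W_{d,d}(t) = (b²/(2ν))·(γ/(2ν))^{2d}·C(2d,d)·(1 − e^{−2νt}·Σ_{k=0}^{2d} (2νt)^k/k!), where C(2d,d) is the central binomial coefficient. -/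
open Matrix Finset


noncomputable def balloonF (c : ℝ) (m : ℕ) (t : ℝ) : ℝ :=
  (Nat.factorial m : ℝ) / c ^ (m + 1) *
    (1 - Real.exp (-c * t) * ∑ k ∈ Finset.range (m + 1), (c * t) ^ k / (Nat.factorial k : ℝ))

lemma balloonF_zero (c : ℝ) (m : ℕ) : balloonF c m 0 = 0 := by
  unfold balloonF
  rw [Finset.sum_eq_single 0]
  · simp
  · intro k _ hk; simp [zero_pow hk]
  · simp

lemma balloonF_rec (c : ℝ) (hc : c ≠ 0) (m : ℕ) (t : ℝ) :
    c * balloonF c (m + 1) t = ((m : ℝ) + 1) * balloonF c m t - t ^ (m + 1) * Real.exp (-c * t) := by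
  unfold balloonF
  rw [Finset.sum_range_succ]
  have h1 : (c : ℝ) ^ (m + 1) ≠ 0 := pow_ne_zero _ hc
  have h2 : (Nat.factorial m : ℝ) ≠ 0 := Nat.cast_ne_zero.2 (Nat.factorial_pos m).ne'
  have h3 : (Nat.factorial (m + 1) : ℝ) ≠ 0 := Nat.cast_ne_zero.2 (Nat.factorial_pos _).ne'
  push_cast [Nat.factorial_succ]
  field_simp
  ring

lemma balloonF_base (c : ℝ) (hc : c ≠ 0) (t : ℝ) :
    c * balloonF c 0 t = 1 - Real.exp (-c * t) := by
  unfold balloonF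
  rw [Finset.sum_range_one]
  field_simp
  simp

lemma exp_neg_hasDerivAt (c t : ℝ) :
    HasDerivAt (fun τ : ℝ => Real.exp (-c * τ)) (Real.exp (-c * t) * (-c * 1)) t :=
  ((hasDerivAt_id t).const_mul (-c)).exp

lemma balloonF_hasDerivAt (c : ℝ) (hc : c ≠ 0) :
    ∀ (m : ℕ) (t : ℝ), HasDerivAt (balloonF c m) (t ^ m * Real.exp (-c * t)) t := by
  intro m
  induction m with
  | zero =>
    intro t
    have heq : balloonF c 0 = fun t => 1 / c - Real.exp (-c * t) * (1 / c) := by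
      funext t
      unfold balloonF
      rw [Finset.sum_range_one]
      simp
      ring
    rw [heq]
    have h := (hasDerivAt_const t (1 / c)).sub ((exp_neg_hasDerivAt c t).mul_const (1 / c))
    refine h.congr_deriv ?_
    field_simp
    ring
  | succ m ih =>
    intro t
    have heq : balloonF c (m + 1) =
        fun t => (((m : ℝ) + 1) * balloonF c m t - t ^ (m + 1) * Real.exp (-c * t)) / c := by
      funext t
      rw [eq_div_iff hc, ← balloonF_rec c hc]
      ring
    rw [heq]
    have h1 := (ih t).const_mul ((m : ℝ) + 1)
    have h2 := (hasDerivAt_pow (m + 1) t).mul (exp_neg_hasDerivAt c t)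
    have h3 := (h1.sub h2).div_const c
    refine h3.congr_deriv ?_
    simp only [Nat.add_sub_cancel]
    field_simp
    push_cast
    ring

lemma ode_unique_zero (c : ℝ) (g : ℝ → ℝ) (h0 : g 0 = 0)
    (hg : ∀ t, HasDerivAt g (c * g t) t) : ∀ t, g t = 0 := by
  have hu : ∀ t, HasDerivAt (fun τ => Real.exp (-c * τ) * g τ) 0 t := by
    intro t
    have h := (exp_neg_hasDerivAt c t).mul (hg t)
    refine h.congr_deriv ?_
    ring
  intro t
  have hconst := is_const_of_deriv_eq_zero (fun x => (hu x).differentiableAt)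
    (fun x => (hu x).deriv) t 0
  simp only [h0, mul_zero] at hconst
  have := mul_eq_zero.mp hconst
  exact this.resolve_left (Real.exp_ne_zero _)

theorem balloon_gramian_target_element (ν γ : ℝ) (hν : 0 < ν) (hγ : 0 < γ)
    (d b : ℕ) (hd : 1 ≤ d) (hb : 1 ≤ b)
    (A : Matrix (Fin (d + 1)) (Fin (d + 1)) ℝ)
    (hAdiag : ∀ j, A j j = -ν)
    (hAsub : ∀ j : Fin (d + 1), ∀ k : Fin (d + 1), (j : ℕ) = (k : ℕ) + 1 → (j : ℕ) ≤ d - 1 → A j k = γ)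
    (hAlast : ∀ j : Fin (d + 1), ∀ k : Fin (d + 1), (j : ℕ) = d → (k : ℕ) = d - 1 → A j k = b * γ)
    (hAzero : ∀ j k : Fin (d + 1), j ≠ k → (j : ℕ) ≠ (k : ℕ) + 1 → A j k = 0)
    (W : ℝ → Matrix (Fin (d + 1)) (Fin (d + 1)) ℝ)
    (hW0 : W 0 = 0)
    (hWderiv : ∀ (i j : Fin (d + 1)) (t : ℝ),
      HasDerivAt (fun τ => W τ i j)
        (((A * W t + W t * Aᵀ + Matrix.single 0 0 (1 : ℝ) : Matrix (Fin (d + 1)) (Fin (d + 1)) ℝ)) i j) t) :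
    ∀ t : ℝ, 0 ≤ t →
      W t (Fin.last d) (Fin.last d) =
        (b ^ 2 / (2 * ν)) * (γ / (2 * ν)) ^ (2 * d) * (Nat.choose (2 * d) d : ℝ) *
          (1 - Real.exp (-2 * ν * t) *
            ∑ k ∈ Finset.range (2 * d + 1), (2 * ν * t) ^ k / (Nat.factorial k : ℝ)) := by
  have hc : (2 * ν) ≠ 0 := by positivity
  set K : ℕ → ℝ := fun i => if i = d then (b : ℝ) * γ ^ d else γ ^ i with hK
  have hKd : K d = (b : ℝ) * γ ^ d := by simp [hK]
  have hKlt : ∀ i, i < d → K i = γ ^ i := by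
    intro i hi; simp [hK, Nat.ne_of_lt hi]
  have hKne : ∀ i, i ≤ d → K i ≠ 0 := by
    intro i hi
    rcases eq_or_lt_of_le hi with h | h
    · rw [h, hKd]; positivity
    · rw [hKlt i h]; positivity
  have hKstep : ∀ i k : Fin (d + 1), (i : ℕ) = (k : ℕ) + 1 → A i k * K (k : ℕ) = K ((k : ℕ) + 1) := by
    intro i k hik
    have hile : (i : ℕ) ≤ d := Nat.lt_succ_iff.mp i.isLt
    by_cases hid : (i : ℕ) = d
    · have hkd : (k : ℕ) = d - 1 := by omega
      rw [hAlast i k hid hkd]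
      have hkd' : (k : ℕ) < d := by omega
      rw [hKlt _ hkd', ← hik, hid, hKd]
      have hgd : γ ^ d = γ ^ ((k : ℕ) + 1) := by
        congr 1; omega
      rw [hgd, pow_succ]; ring
    · have h1 : (i : ℕ) ≤ d - 1 := by omega
      rw [hAsub i k hik h1]
      have hkd' : (k : ℕ) < d := by omega
      have hkd'' : (k : ℕ) + 1 < d := by omega
      rw [hKlt _ hkd', hKlt _ hkd'', pow_succ]; ring
  have hrow0 : ∀ X : Fin (d + 1) → ℝ, (∑ l, A 0 l * X l) = -ν * X 0 := by
    intro X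
    rw [Finset.sum_eq_single (0 : Fin (d + 1))]
    · rw [hAdiag]
    · intro l _ hl
      rw [hAzero 0 l (Ne.symm hl) (by simp), zero_mul]
    · simp
  have hrowS : ∀ i k : Fin (d + 1), (i : ℕ) = (k : ℕ) + 1 → ∀ X : Fin (d + 1) → ℝ,
      (∑ l, A i l * X l) = -ν * X i + A i k * X k := by
    intro i k hik X
    have hik' : i ≠ k := by
      intro h; rw [h] at hik; omega
    have hzero : ∀ l : Fin (d + 1), l ≠ i → l ≠ k → A i l * X l = 0 := by
      intro l h1 h2
      rw [hAzero i l (Ne.symm h1) (fun h => h2 (Fin.ext (by omega))), zero_mul]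
    calc (∑ l, A i l * X l) = ∑ l ∈ ({i, k} : Finset (Fin (d + 1))), A i l * X l := by
          refine (Finset.sum_subset (Finset.subset_univ _) ?_).symm
          intro x _ hx
          simp only [Finset.mem_insert, Finset.mem_singleton, not_or] at hx
          exact hzero x hx.1 hx.2
      _ = A i i * X i + A i k * X k := Finset.sum_pair hik'
      _ = -ν * X i + A i k * X k := by rw [hAdiag]
  have hfactne : ∀ m : ℕ, (Nat.factorial m : ℝ) ≠ 0 :=
    fun m => Nat.cast_ne_zero.2 (Nat.factorial_pos m).ne'
  have key : ∀ n : ℕ, ∀ i j : Fin (d + 1), (i : ℕ) + (j : ℕ) = n → ∀ t : ℝ,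
      W t i j = K (i : ℕ) * K (j : ℕ) /
        ((Nat.factorial (i : ℕ) : ℝ) * (Nat.factorial (j : ℕ))) * balloonF (2 * ν) n t := by
    intro n
    induction n using Nat.strong_induction_on with
    | _ n ih =>
      intro i j hij t
      set Cst := K (i : ℕ) * K (j : ℕ) /
        ((Nat.factorial (i : ℕ) : ℝ) * (Nat.factorial (j : ℕ))) with hCst
      have hg0 : W 0 i j - Cst * balloonF (2 * ν) n 0 = 0 := by
        rw [hW0, balloonF_zero]; simp
      have hL : ∀ τ : ℝ,
          ((A * W τ + W τ * Aᵀ + Matrix.single 0 0 (1 : ℝ) :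
            Matrix (Fin (d + 1)) (Fin (d + 1)) ℝ)) i j
          = -(2 * ν) * W τ i j +
            Cst * (τ ^ n * Real.exp (-(2 * ν) * τ) + (2 * ν) * balloonF (2 * ν) n τ) := by
        intro τ
        have eentry : ((A * W τ + W τ * Aᵀ + Matrix.single 0 0 (1 : ℝ) :
            Matrix (Fin (d + 1)) (Fin (d + 1)) ℝ)) i j
            = (∑ l, A i l * W τ l j) + (∑ l, A j l * W τ i l) +
              (if (0 : Fin (d + 1)) = i ∧ (0 : Fin (d + 1)) = j then (1 : ℝ) else 0) := by
          simp only [Matrix.add_apply, Matrix.mul_apply, Matrix.transpose_apply,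
            Matrix.single, Matrix.of_apply]
          congr 1
          congr 1
          exact Finset.sum_congr rfl fun l _ => mul_comm _ _
        rw [eentry]
        rcases Nat.eq_zero_or_pos (i : ℕ) with hi0 | hipos
        · -- i = 0
          have hieq : i = 0 := Fin.ext (by simpa using hi0)
          rcases Nat.eq_zero_or_pos (j : ℕ) with hj0 | hjpos
          · -- both zero, n = 0
            have hjeq : j = 0 := Fin.ext (by simpa using hj0)
            have hn : n = 0 := by omega
            have hK0 : K 0 = 1 := by rw [hKlt 0 (by omega)]; simp
            have hC : Cst = 1 := by
              rw [hCst, hieq, hjeq]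
              simp [hK0, Nat.factorial]
            have hrec0 : τ ^ n * Real.exp (-(2 * ν) * τ) + 2 * ν * balloonF (2 * ν) n τ = 1 := by
              rw [hn]
              have := balloonF_base (2 * ν) hc τ
              simp only [pow_zero, one_mul]
              linarith
            rw [hC, hrec0, if_pos ⟨hieq.symm, hjeq.symm⟩, hieq, hjeq,
              hrow0 (fun l => W τ l 0), hrow0 (fun l => W τ 0 l)]
            ring
          · -- i = 0, j ≥ 1
            obtain ⟨m, hjm⟩ : ∃ m, (j : ℕ) = m + 1 := ⟨(j : ℕ) - 1, by omega⟩
            have hn : n = m + 1 := by omega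
            set jpf : Fin (d + 1) := ⟨m, by omega⟩ with hjpd
            have hjpval : (jpf : ℕ) = m := rfl
            have hnot : ¬((0 : Fin (d + 1)) = i ∧ (0 : Fin (d + 1)) = j) := by
              rintro ⟨-, h2⟩
              rw [← h2] at hjm
              simp at hjm
            have hIH := ih m (by omega) i jpf (by simp [hjpval, hi0]) τ
            have hstep := hKstep j jpf (by rw [hjpval, hjm])
            rw [hjpval] at hstep
            have hKj : K (j : ℕ) = A j jpf * K m := by rw [hjm]; exact hstep.symm
            have hjfac : (Nat.factorial (j : ℕ) : ℝ) = ((m : ℝ) + 1) * (Nat.factorial m : ℝ) := by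
              rw [hjm]; push_cast [Nat.factorial_succ]; ring
            have hrec' : τ ^ n * Real.exp (-(2 * ν) * τ) + 2 * ν * balloonF (2 * ν) n τ
                = ((m : ℝ) + 1) * balloonF (2 * ν) m τ := by
              rw [hn]
              have := balloonF_rec (2 * ν) hc m τ
              linarith
            have hK0 : K 0 = 1 := by rw [hKlt 0 (by omega)]; simp
            have hKmne : K m ≠ 0 := hKne m (by omega)
            have hm1 : ((m : ℝ) + 1) ≠ 0 := by positivity
            rw [if_neg hnot, hrowS j jpf (by rw [hjpval, hjm]) (fun l => W τ i l), hrec']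
            simp only [hieq, Fin.val_zero] at hIH ⊢
            rw [hrow0 (fun l => W τ l j), hIH, hCst]
            simp only [hi0, hjpval, hK0, Nat.factorial_zero, Nat.cast_one, hKj, hjfac]
            field_simp
            ring
        · -- i ≥ 1
          obtain ⟨p, him⟩ : ∃ p, (i : ℕ) = p + 1 := ⟨(i : ℕ) - 1, by omega⟩
          set ipf : Fin (d + 1) := ⟨p, by omega⟩ with hipd
          have hipval : (ipf : ℕ) = p := rfl
          have hnoti : ¬((0 : Fin (d + 1)) = i ∧ (0 : Fin (d + 1)) = j) := by
            rintro ⟨h1, -⟩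
            rw [← h1] at him
            simp at him
          have hstepi := hKstep i ipf (by rw [hipval, him])
          rw [hipval] at hstepi
          have hKi : K (i : ℕ) = A i ipf * K p := by rw [him]; exact hstepi.symm
          have hifac : (Nat.factorial (i : ℕ) : ℝ) = ((p : ℝ) + 1) * (Nat.factorial p : ℝ) := by
            rw [him]; push_cast [Nat.factorial_succ]; ring
          have hKpne : K p ≠ 0 := hKne p (by omega)
          have hp1 : ((p : ℝ) + 1) ≠ 0 := by positivity
          rcases Nat.eq_zero_or_pos (j : ℕ) with hj0 | hjpos
          · -- j = 0
            have hjeq : j = 0 := Fin.ext (by simpa using hj0)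
            have hn : n = p + 1 := by omega
            have hIH := ih p (by omega) ipf j (by simp [hipval, hj0]) τ
            have hrec' : τ ^ n * Real.exp (-(2 * ν) * τ) + 2 * ν * balloonF (2 * ν) n τ
                = ((p : ℝ) + 1) * balloonF (2 * ν) p τ := by
              rw [hn]
              have := balloonF_rec (2 * ν) hc p τ
              linarith
            have hK0 : K 0 = 1 := by rw [hKlt 0 (by omega)]; simp
            rw [if_neg hnoti, hrowS i ipf (by rw [hipval, him]) (fun l => W τ l j), hrec']
            simp only [hjeq, Fin.val_zero] at hIH ⊢
            rw [hrow0 (fun l => W τ i l), hIH, hCst]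
            simp only [hj0, hipval, hK0, Nat.factorial_zero, Nat.cast_one, hKi, hifac]
            field_simp
            ring
          · -- both positive
            obtain ⟨m, hjm⟩ : ∃ m, (j : ℕ) = m + 1 := ⟨(j : ℕ) - 1, by omega⟩
            set jpf : Fin (d + 1) := ⟨m, by omega⟩ with hjpd
            have hjpval : (jpf : ℕ) = m := rfl
            have hstepj := hKstep j jpf (by rw [hjpval, hjm])
            rw [hjpval] at hstepj
            have hKj : K (j : ℕ) = A j jpf * K m := by rw [hjm]; exact hstepj.symm
            have hjfac : (Nat.factorial (j : ℕ) : ℝ) = ((m : ℝ) + 1) * (Nat.factorial m : ℝ) := by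
              rw [hjm]; push_cast [Nat.factorial_succ]; ring
            have hKmne : K m ≠ 0 := hKne m (by omega)
            have hm1 : ((m : ℝ) + 1) ≠ 0 := by positivity
            have hn : n = p + m + 2 := by omega
            have hIH1 := ih (n - 1) (by omega) ipf j (by simp only [hipval]; omega) τ
            have hIH2 := ih (n - 1) (by omega) i jpf (by simp only [hjpval]; omega) τ
            have hrec' : τ ^ n * Real.exp (-(2 * ν) * τ) + 2 * ν * balloonF (2 * ν) n τ
                = ((p : ℝ) + (m : ℝ) + 2) * balloonF (2 * ν) (n - 1) τ := by
              have hrec := balloonF_rec (2 * ν) hc (n - 1) τ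
              have hn1 : n - 1 + 1 = n := by omega
              rw [hn1] at hrec
              have hcast : ((n - 1 : ℕ) : ℝ) + 1 = (p : ℝ) + (m : ℝ) + 2 := by
                have h1 : n - 1 = p + m + 1 := by omega
                rw [h1]; push_cast; ring
              rw [hcast] at hrec
              linarith
            rw [if_neg hnoti, hrowS i ipf (by rw [hipval, him]) (fun l => W τ l j),
              hrowS j jpf (by rw [hjpval, hjm]) (fun l => W τ i l), hrec']
            simp only [hipval, hjpval] at hIH1 hIH2
            rw [hIH1, hIH2, hCst]
            simp only [hKi, hKj, hifac, hjfac]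
            field_simp
            ring
      have hderiv : ∀ τ : ℝ, HasDerivAt (fun σ => W σ i j - Cst * balloonF (2 * ν) n σ)
          (-(2 * ν) * (W τ i j - Cst * balloonF (2 * ν) n τ)) τ := by
        intro τ
        have h1 := hWderiv i j τ
        have h2 := (balloonF_hasDerivAt (2 * ν) hc n τ).const_mul Cst
        have h3 := h1.sub h2
        refine h3.congr_deriv ?_
        rw [hL τ]
        ring
      have := ode_unique_zero (-(2 * ν)) _ hg0 hderiv t
      linarith [this]
  intro t ht
  have hlast : ((Fin.last d : Fin (d + 1)) : ℕ) = d := Fin.val_last d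
  have hkey := key (2 * d) (Fin.last d) (Fin.last d) (by rw [hlast]; ring) t
  rw [hkey, hlast, hKd]
  unfold balloonF
  have hexp : -(2 * ν) * t = -2 * ν * t := by ring
  rw [hexp]
  have hcb : ((Nat.factorial (2 * d) : ℕ) : ℝ) =
      ((2 * d).choose d : ℝ) * (Nat.factorial d : ℝ) * (Nat.factorial d : ℝ) := by
    have h := Nat.choose_mul_factorial_mul_factorial (show d ≤ 2 * d by omega)
    rw [show 2 * d - d = d by omega] at h
    push_cast [← h]
    ring
  rw [hcb]
  have hfdne : (Nat.factorial d : ℝ) ≠ 0 := hfactne d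
  have hpow : (2 * ν) ^ (2 * d + 1) = (2 * ν) ^ (2 * d) * (2 * ν) := pow_succ _ _
  rw [hpow, div_pow]
  have hpne : ((2 : ℝ) * ν) ^ (2 * d) ≠ 0 := pow_ne_zero _ hc
  field_simp
  ring
end

section
/- Let ν, γ > 0 and s > 0, and set ρ = γ/(s+2ν), v₀ = 1/(s(s+2ν)). Define V_{j,k} for j,k ≥ 0 by V_{0,0} = v₀, (s+2ν)V_{j,0} = γ·V_{j−1,0}, (s+2ν)V_{0,k} = γ·V_{0,k−1}, and (s+2ν)V_{j,k} = γ·V_{j−1,k} + γ·V_{j,k−1} for j,k ≥ 1. Then V_{j,k} = v₀·C(j+k, k)·ρ^{j+k} for all j,k ≥ 0. -/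
theorem laplace_domain_closed_form (ν γ s : ℝ) (hν : 0 < ν) (hγ : 0 < γ) (hs : 0 < s)
    (V : ℕ → ℕ → ℝ)
    (h00 : V 0 0 = 1 / (s * (s + 2 * ν)))
    (hj0 : ∀ j : ℕ, 1 ≤ j → (s + 2 * ν) * V j 0 = γ * V (j - 1) 0)
    (h0k : ∀ k : ℕ, 1 ≤ k → (s + 2 * ν) * V 0 k = γ * V 0 (k - 1))
    (hjk : ∀ j k : ℕ, 1 ≤ j → 1 ≤ k →
      (s + 2 * ν) * V j k = γ * V (j - 1) k + γ * V j (k - 1)) :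
    ∀ j k : ℕ, V j k = (1 / (s * (s + 2 * ν))) * (Nat.choose (j + k) k : ℝ) *
      (γ / (s + 2 * ν)) ^ (j + k) := by
  have hd : (0:ℝ) < s + 2 * ν := by linarith
  have hd' : s + 2 * ν ≠ 0 := ne_of_gt hd
  intro j
  induction j with
  | zero =>
    intro k
    induction k with
    | zero => simpa using h00
    | succ k ihk =>
      have h := h0k (k + 1) (by omega)
      simp only [Nat.add_sub_cancel] at h
      have : V 0 (k + 1) = γ * V 0 k / (s + 2 * ν) := by
        field_simp at h ⊢; linarith
      rw [this, ihk]
      simp [Nat.choose_self]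
      field_simp
      ring_nf
      field_simp
  | succ j ihj =>
    intro k
    induction k with
    | zero =>
      have h := hj0 (j + 1) (by omega)
      simp only [Nat.add_sub_cancel] at h
      have : V (j + 1) 0 = γ * V j 0 / (s + 2 * ν) := by
        field_simp at h ⊢; linarith
      rw [this, ihj 0]
      simp [Nat.choose_zero_right]
      field_simp
      ring_nf
      field_simp
    | succ k ihk =>
      have h := hjk (j + 1) (k + 1) (by omega) (by omega)
      simp only [Nat.add_sub_cancel] at h
      have hV : V (j + 1) (k + 1) = (γ * V j (k + 1) + γ * V (j + 1) k) / (s + 2 * ν) := by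
        field_simp at h ⊢; linarith
      rw [hV, ihj (k + 1), ihk]
      have hpa : ((j + 1 + (k + 1)).choose (k + 1) : ℝ)
          = ((j + (k + 1)).choose (k + 1) : ℝ) + ((j + 1 + k).choose k : ℝ) := by
        have : j + 1 + (k + 1) = (j + 1 + k) + 1 := by omega
        rw [this, Nat.choose_succ_succ (j + 1 + k) k]
        push_cast
        have : j + 1 + k = j + (k + 1) := by omega
        rw [this]
        ring
      rw [hpa]
      have he1 : j + 1 + (k + 1) = (j + (k + 1)) + 1 := by omega
      have he2 : j + 1 + (k + 1) = (j + 1 + k) + 1 := by omega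
      rw [show j + (k+1) = j + k + 1 by omega, show j + 1 + k = j + k + 1 by omega,
        show j + 1 + (k+1) = j + k + 2 by omega]
      field_simp
      ring_nf
      field_simp
      ring
end
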